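/- (Intertwining of parallel and sequential transformations.) For a driving sequence W with 𝔠(W) = κ, define the parallel map T_W(I¹,…,I^N) = (D(W,I¹),…,D(W,I^N)) and the sequential map S_W(I¹,…,I^N) = (D(W¹,I¹),…,D(W^N,I^N)) where W¹ = W and W^i = R(W^{i-1}, I^{i-1}) for i ≥ 2. Let 𝔇(I¹,…,I^N) = (D^{(1)}(I¹), D^{(2)}(I¹,I²), …, D^{(N)}(I¹,…,I^N)). Then on N-tuples with κ < 𝔠(I¹) < ⋯ < 𝔠(I^N) one has T_W ∘ 𝔇 = 𝔇 ∘ S_W. -/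

import Mathlib

open Filter Topology

noncomputable section

/-- Left-tail logarithmic Cesàro limit of a bi-infinite positive sequence. -/
def cesaroLim (X : ℤ → ℝ) (c : ℝ) : Prop :=
  Filter.Tendsto (fun n : ℕ => (∑ k ∈ Finset.range n, Real.log (X (-(k : ℤ)))) / (n : ℝ))
    Filter.atTop (nhds c)

/-- partial log sums going left from `k` -/
def Lsum (X : ℤ → ℝ) (k : ℤ) (m : ℕ) : ℝ :=
  ∑ r ∈ Finset.range m, Real.log (X (k - (r : ℤ)))

lemma Lsum_succ (X : ℤ → ℝ) (k : ℤ) (m : ℕ) :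
    Lsum X k (m + 1) = Lsum X k m + Real.log (X (k - (m : ℤ))) :=
  Finset.sum_range_succ _ m

lemma Lsum_succ' (X : ℤ → ℝ) (k : ℤ) (m : ℕ) :
    Lsum X k (m + 1) = Real.log (X k) + Lsum X (k - 1) m := by
  have := Finset.sum_range_succ' (fun r : ℕ => Real.log (X (k - (r : ℤ)))) m
  rw [Lsum, this]
  simp only [Nat.cast_add, Nat.cast_one, Nat.cast_zero]
  rw [add_comm, Lsum]
  congr 1
  · congr 1; simp
  · apply Finset.sum_congr rfl
    intro r _
    congr 2
    ring

lemma Lsum_add (X : ℤ → ℝ) (k : ℤ) (m n : ℕ) :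
    Lsum X k (m + n) = Lsum X k m + Lsum X (k - (m : ℤ)) n := by
  induction n with
  | zero => simp [Lsum]
  | succ n ih =>
      rw [← Nat.add_assoc, Lsum_succ, ih, Lsum_succ]
      rw [add_assoc]
      congr 3
      push_cast
      ring

lemma tendsto_div_aux1 (f : ℕ → ℝ) (c : ℝ) :
    Tendsto (fun m : ℕ => f (m + 1) / ((m : ℝ) + 1)) atTop (𝓝 c) ↔
      Tendsto (fun m : ℕ => f m / (m : ℝ)) atTop (𝓝 c) := by
  rw [← tendsto_add_atTop_iff_nat (f := fun m : ℕ => f m / (m : ℝ)) 1]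
  simp [Nat.cast_add]

lemma tendsto_nat_div_succ : Tendsto (fun m : ℕ => (m : ℝ) / ((m : ℝ) + 1)) atTop (𝓝 1) := by
  have h1 : Tendsto (fun m : ℕ => 1 - 1 / ((m : ℝ) + 1)) atTop (𝓝 1) := by
    have := (tendsto_natCast_atTop_atTop (R := ℝ)).atTop_add tendsto_const_nhds (C := 1)
    have h0 : Tendsto (fun m : ℕ => 1 / ((m : ℝ) + 1)) atTop (𝓝 0) :=
      tendsto_const_nhds.div_atTop this
    simpa using tendsto_const_nhds.sub h0
  refine h1.congr' ?_
  filter_upwards [eventually_atTop.2 ⟨1, fun m hm => hm⟩] with m hm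
  have : ((m : ℝ) + 1) ≠ 0 := by positivity
  field_simp
  ring

lemma tendsto_inv_nat : Tendsto (fun m : ℕ => 1 / (m : ℝ)) atTop (𝓝 0) :=
  tendsto_one_div_atTop_nhds_zero_nat

/-- from `f m / m → c` deduce `(f (m+1) + a) / m → c`. -/
lemma tendsto_div_shift_up (f : ℕ → ℝ) (c a : ℝ)
    (h : Tendsto (fun m : ℕ => f m / (m : ℝ)) atTop (𝓝 c)) :
    Tendsto (fun m : ℕ => (f (m + 1) + a) / (m : ℝ)) atTop (𝓝 c) := by
  have h2 : Tendsto (fun m : ℕ => f (m + 1) / ((m : ℝ) + 1)) atTop (𝓝 c) :=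
    (tendsto_div_aux1 f c).2 h
  have h3 : Tendsto (fun m : ℕ => ((m : ℝ) + 1) / (m : ℝ)) atTop (𝓝 1) := by
    have : Tendsto (fun m : ℕ => 1 + 1 / (m : ℝ)) atTop (𝓝 1) := by
      simpa using tendsto_const_nhds.add tendsto_inv_nat
    refine this.congr' ?_
    filter_upwards [eventually_atTop.2 ⟨1, fun m hm => hm⟩] with m hm
    have hm' : (m : ℝ) ≠ 0 := by positivity
    field_simp
  have h4 : Tendsto (fun m : ℕ => a / (m : ℝ)) atTop (𝓝 0) := by
    simpa [div_eq_mul_inv] using (tendsto_const_nhds (x := a)).mul tendsto_inv_nat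
  have h5 := (h2.mul h3).add h4
  rw [mul_one, add_zero] at h5
  refine h5.congr' ?_
  filter_upwards [eventually_atTop.2 ⟨1, fun m hm => hm⟩] with m hm
  have hm' : (m : ℝ) ≠ 0 := by
    have : (0:ℝ) < m := by exact_mod_cast hm
    linarith
  have hm1 : ((m : ℝ) + 1) ≠ 0 := by positivity
  field_simp

/-- from `f m / m → c` deduce `(a + f m) / (m+1) → c`. -/
lemma tendsto_div_shift_down (f : ℕ → ℝ) (c a : ℝ)
    (h : Tendsto (fun m : ℕ => f m / (m : ℝ)) atTop (𝓝 c)) :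
    Tendsto (fun m : ℕ => (a + f m) / ((m : ℝ) + 1)) atTop (𝓝 c) := by
  have h3 : Tendsto (fun m : ℕ => (m : ℝ) / ((m : ℝ) + 1)) atTop (𝓝 1) := tendsto_nat_div_succ
  have h4 : Tendsto (fun m : ℕ => a / ((m : ℝ) + 1)) atTop (𝓝 0) := by
    have hb : Tendsto (fun m : ℕ => (m : ℝ) + 1) atTop atTop :=
      (tendsto_natCast_atTop_atTop (R := ℝ)).atTop_add tendsto_const_nhds
    exact tendsto_const_nhds.div_atTop hb
  have h5 := h4.add (h.mul h3)
  rw [mul_one, zero_add] at h5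
  refine h5.congr' ?_
  filter_upwards [eventually_atTop.2 ⟨1, fun m hm => hm⟩] with m hm
  have hm' : (m : ℝ) ≠ 0 := by
    have : (0:ℝ) < m := by exact_mod_cast hm
    linarith
  have hm1 : ((m : ℝ) + 1) ≠ 0 := by positivity
  field_simp

lemma tendsto_Lsum {X : ℤ → ℝ} {c : ℝ} (h : cesaroLim X c) (k : ℤ) :
    Tendsto (fun m : ℕ => Lsum X k m / (m : ℝ)) atTop (𝓝 c) := by
  have base : Tendsto (fun m : ℕ => Lsum X 0 m / (m : ℝ)) atTop (𝓝 c) := by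
    refine h.congr ?_
    intro n
    simp [Lsum]
  have up : ∀ k : ℤ, Tendsto (fun m : ℕ => Lsum X k m / (m : ℝ)) atTop (𝓝 c) →
      Tendsto (fun m : ℕ => Lsum X (k + 1) m / (m : ℝ)) atTop (𝓝 c) := by
    intro k hk
    rw [← tendsto_div_aux1]
    have : ∀ m : ℕ, Lsum X (k + 1) (m + 1) = Real.log (X (k + 1)) + Lsum X k m := by
      intro m
      have := Lsum_succ' X (k + 1) m
      simpa using this
    simp only [this]
    exact tendsto_div_shift_down _ c _ hk
  have down : ∀ k : ℤ, Tendsto (fun m : ℕ => Lsum X k m / (m : ℝ)) atTop (𝓝 c) →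
      Tendsto (fun m : ℕ => Lsum X (k - 1) m / (m : ℝ)) atTop (𝓝 c) := by
    intro k hk
    have : ∀ m : ℕ, Lsum X (k - 1) m = Lsum X k (m + 1) + (-Real.log (X k)) := by
      intro m
      have := Lsum_succ' X k m
      linarith [this]
    simp only [this]
    exact tendsto_div_shift_up _ c _ hk
  induction k using Int.induction_on with
  | zero => exact base
  | succ n ih => exact up n ih
  | pred n ih => exact down (-n) ih

lemma tendsto_log_left {X : ℤ → ℝ} {c : ℝ} (h : cesaroLim X c) (k : ℤ) :
    Tendsto (fun m : ℕ => Real.log (X (k - (m : ℤ))) / (m : ℝ)) atTop (𝓝 0) := by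
  have h1 := tendsto_Lsum h k
  have h2 : Tendsto (fun m : ℕ => (Lsum X k (m + 1) + 0) / (m : ℝ)) atTop (𝓝 c) :=
    tendsto_div_shift_up _ c 0 h1
  have h3 := h2.sub h1
  rw [sub_self] at h3
  refine h3.congr ?_
  intro m
  rw [Lsum_succ]
  ring

/-- The `m`-th term of the series defining `J_k = Σ_{i ≤ k} W_i ∏_{j=i+1}^k (W_j / I_j)`,
corresponding to `i = k - m`. -/
def Jterm (W I : ℤ → ℝ) (k : ℤ) (m : ℕ) : ℝ :=
  W (k - (m : ℤ)) * ∏ r ∈ Finset.range m, (W (k - (r : ℤ)) / I (k - (r : ℤ)))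

/-- `S(W,I)_k = Σ_{i ≤ k} W_i ∏_{j=i+1}^k (W_j / I_j)`. -/
def Smap (W I : ℤ → ℝ) (k : ℤ) : ℝ := ∑' m : ℕ, Jterm W I k m

/-- The update map `D(W,I)_k = I_k J_k / J_{k-1}`. -/
def Dmap (W I : ℤ → ℝ) (k : ℤ) : ℝ := I k * Smap W I k / Smap W I (k - 1)

/-- The dual-weight map `R(W,I)_k = (I_k⁻¹ + J_{k-1}⁻¹)⁻¹`. -/
def Rmap (W I : ℤ → ℝ) (k : ℤ) : ℝ := ((I k)⁻¹ + (Smap W I (k - 1))⁻¹)⁻¹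

section basic
variable {W I : ℤ → ℝ} (hW : ∀ k, 0 < W k) (hI : ∀ k, 0 < I k)

include hW hI in
lemma Jterm_pos (k : ℤ) (m : ℕ) : 0 < Jterm W I k m := by
  refine mul_pos (hW _) (Finset.prod_pos fun r _ => div_pos (hW _) (hI _))

include hW hI in
lemma log_Jterm (k : ℤ) (m : ℕ) :
    Real.log (Jterm W I k m) = Lsum W k (m + 1) - Lsum I k m := by
  rw [Jterm, Real.log_mul (hW _).ne' (Finset.prod_pos fun r _ => div_pos (hW _) (hI _)).ne',
    Real.log_prod]
  · rw [Lsum_succ]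
    have : ∀ r ∈ Finset.range m, Real.log (W (k - (r:ℤ)) / I (k - (r:ℤ)))
        = Real.log (W (k - (r:ℤ))) - Real.log (I (k - (r:ℤ))) := fun r _ =>
      Real.log_div (hW _).ne' (hI _).ne'
    rw [Finset.sum_congr rfl this, Finset.sum_sub_distrib]
    rw [Lsum, Lsum]
    ring
  · exact fun r _ => (div_pos (hW _) (hI _)).ne'

include hW hI in
lemma tendsto_log_Jterm {κ c : ℝ} (hcW : cesaroLim W κ) (hcI : cesaroLim I c) (k : ℤ) :
    Tendsto (fun m : ℕ => Real.log (Jterm W I k m) / (m : ℝ)) atTop (𝓝 (κ - c)) := by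
  have h1 : Tendsto (fun m : ℕ => (Lsum W k (m + 1) + 0) / (m : ℝ)) atTop (𝓝 κ) :=
    tendsto_div_shift_up _ κ 0 (tendsto_Lsum hcW k)
  have h2 := h1.sub (tendsto_Lsum hcI k)
  refine h2.congr ?_
  intro m
  rw [log_Jterm hW hI]
  ring

end basic

lemma summable_of_log {f : ℕ → ℝ} (hf : ∀ m, 0 < f m) {L : ℝ} (hL : L < 0)
    (h : Tendsto (fun m : ℕ => Real.log (f m) / (m : ℝ)) atTop (𝓝 L)) : Summable f := by
  have hev : ∀ᶠ m : ℕ in atTop, Real.log (f m) / (m : ℝ) < L / 2 :=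
    h.eventually_lt_const (by linarith)
  obtain ⟨N, hN⟩ := (hev.and (eventually_ge_atTop 1)).exists_forall_of_atTop
  have key : ∀ m : ℕ, f (m + N + 1) ≤ Real.exp (L / 2) ^ (m + N + 1) := by
    intro m
    have hm : N ≤ m + N + 1 := by omega
    obtain ⟨h1, h2⟩ := hN (m + N + 1) hm
    have hmpos : (0:ℝ) < ((m + N + 1 : ℕ) : ℝ) := by positivity
    have : Real.log (f (m + N + 1)) < L / 2 * ((m + N + 1 : ℕ) : ℝ) := by
      have := (div_lt_iff₀ hmpos).1 h1
      linarith
    have := Real.exp_lt_exp.2 this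
    rw [Real.exp_log (hf _)] at this
    calc f (m + N + 1) ≤ Real.exp (L / 2 * ((m + N + 1 : ℕ) : ℝ)) := this.le
      _ = Real.exp (L / 2) ^ (m + N + 1) := by
          rw [← Real.exp_nat_mul]; ring_nf
  have hgeom : Summable (fun m : ℕ => Real.exp (L / 2) ^ (m + N + 1)) := by
    apply (summable_nat_add_iff (N + 1)).2
    apply summable_geometric_of_lt_one (Real.exp_pos _).le
    rw [Real.exp_lt_one_iff]
    linarith
  have : Summable (fun m : ℕ => f (m + (N + 1))) := by
    refine Summable.of_nonneg_of_le (f := fun m : ℕ => Real.exp (L / 2) ^ (m + N + 1))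
      (fun m => (hf _).le) (fun m => ?_) ?_
    · have := key m
      simpa [Nat.add_assoc] using this
    · exact hgeom
  exact (summable_nat_add_iff (N + 1)).1 this

lemma tendsto_zero_of_log {f : ℕ → ℝ} (hf : ∀ m, 0 < f m) {L : ℝ} (hL : L < 0)
    (h : Tendsto (fun m : ℕ => Real.log (f m) / (m : ℝ)) atTop (𝓝 L)) :
    Tendsto f atTop (𝓝 0) :=
  (summable_of_log hf hL h).tendsto_atTop_zero

section conv
variable {W I : ℤ → ℝ} {κ c : ℝ} (hW : ∀ k, 0 < W k) (hI : ∀ k, 0 < I k)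
  (hcW : cesaroLim W κ) (hcI : cesaroLim I c) (hκc : κ < c)

include hW hI hcW hcI hκc in
lemma summable_Jterm (k : ℤ) : Summable (Jterm W I k) :=
  summable_of_log (Jterm_pos hW hI k) (by linarith : κ - c < 0)
    (tendsto_log_Jterm hW hI hcW hcI k)

include hW hI hcW hcI hκc in
lemma Smap_pos (k : ℤ) : 0 < Smap W I k := by
  have h0 : Jterm W I k 0 = W k := by simp [Jterm]
  have := Summable.le_tsum (summable_Jterm hW hI hcW hcI hκc k) 0
    (fun m _ => (Jterm_pos hW hI k m).le)
  rw [h0] at this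
  exact lt_of_lt_of_le (hW k) this

lemma Jterm_succ (W I : ℤ → ℝ) (k : ℤ) (m : ℕ) :
    Jterm W I k (m + 1) = (W k / I k) * Jterm W I (k - 1) m := by
  rw [Jterm, Jterm, Finset.prod_range_succ']
  have e1 : k - ((m + 1 : ℕ) : ℤ) = k - 1 - (m : ℤ) := by push_cast; ring
  have e2 : ∀ r : ℕ, k - ((r + 1 : ℕ) : ℤ) = k - 1 - (r : ℤ) := by
    intro r; push_cast; ring
  rw [e1]
  simp only [e2, Nat.cast_zero, sub_zero]
  ring

include hW hI hcW hcI hκc in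
lemma Smap_rec (k : ℤ) : Smap W I k = W k + (W k / I k) * Smap W I (k - 1) := by
  have hs := summable_Jterm hW hI hcW hcI hκc k
  rw [Smap, Summable.tsum_eq_zero_add hs]
  have h0 : Jterm W I k 0 = W k := by simp [Jterm]
  rw [h0]
  congr 1
  rw [show (fun m : ℕ => Jterm W I k (m + 1)) = fun m : ℕ => (W k / I k) * Jterm W I (k - 1) m
    from funext fun m => Jterm_succ W I k m, tsum_mul_left]
  rfl

include hW hI hcW hcI hκc in
lemma Rmap_eq (k : ℤ) : Rmap W I k = W k * Smap W I (k - 1) / Smap W I k := by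
  have h1 := Smap_pos hW hI hcW hcI hκc k
  have h2 := Smap_pos hW hI hcW hcI hκc (k - 1)
  have hrec := Smap_rec hW hI hcW hcI hκc k
  have hIk := hI k
  have hsum : (0:ℝ) < (I k)⁻¹ + (Smap W I (k - 1))⁻¹ := by positivity
  rw [Rmap, hrec]
  rw [eq_div_iff (by rw [hrec] at h1; exact h1.ne')]
  field_simp
  ring

include hW hI hcW hcI hκc in
lemma Rmap_pos (k : ℤ) : 0 < Rmap W I k := by
  rw [Rmap]
  have h2 := Smap_pos hW hI hcW hcI hκc (k - 1)
  have hIk := hI k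
  positivity

include hW hI hcW hcI hκc in
lemma Dmap_pos (k : ℤ) : 0 < Dmap W I k := by
  rw [Dmap]
  have h1 := Smap_pos hW hI hcW hcI hκc k
  have h2 := Smap_pos hW hI hcW hcI hκc (k - 1)
  have hIk := hI k
  positivity

end conv

section conv2
variable {W I : ℤ → ℝ} {κ c : ℝ} (hW : ∀ k, 0 < W k) (hI : ∀ k, 0 < I k)
  (hcW : cesaroLim W κ) (hcI : cesaroLim I c) (hκc : κ < c)

include hW hI hcW hcI hκc in
lemma log_Smap_tendsto (k : ℤ) :
    Tendsto (fun m : ℕ => Real.log (Smap W I (k - (m : ℤ))) / (m : ℝ)) atTop (𝓝 0) := by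
  rw [Metric.tendsto_atTop]
  intro ε hε
  set δ : ℝ := c - κ with hδdef
  have hδ : 0 < δ := by simp [hδdef]; linarith
  set ε' : ℝ := min ε δ / 8 with hε'def
  have hε' : 0 < ε' := by positivity
  have hε'ε : ε' ≤ ε / 8 := by
    rw [hε'def]; exact div_le_div_of_nonneg_right (min_le_left _ _) (by norm_num) |>.trans_eq rfl
  have hε'δ : ε' ≤ δ / 8 := by
    rw [hε'def]; exact div_le_div_of_nonneg_right (min_le_right _ _) (by norm_num)
  -- quantitative Cesàro bounds
  have hWev : ∀ᶠ n : ℕ in atTop, |Lsum W k n - κ * n| ≤ ε' * n := by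
    have h1 := (tendsto_Lsum hcW k).eventually (Metric.ball_mem_nhds κ hε')
    filter_upwards [h1, eventually_ge_atTop 1] with n h1 hn
    have hn' : (0:ℝ) < n := by exact_mod_cast hn
    rw [Real.dist_eq] at h1
    have : |Lsum W k n / n - κ| * n ≤ ε' * n := by
      apply mul_le_mul_of_nonneg_right h1.le hn'.le
    calc |Lsum W k n - κ * n| = |Lsum W k n / n - κ| * n := by
          rw [← abs_of_pos hn', ← abs_mul]
          congr 1
          field_simp
          rw [abs_of_pos hn']; ring
      _ ≤ ε' * n := this
  have hIev : ∀ᶠ n : ℕ in atTop, |Lsum I k n - c * n| ≤ ε' * n := by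
    have h1 := (tendsto_Lsum hcI k).eventually (Metric.ball_mem_nhds c hε')
    filter_upwards [h1, eventually_ge_atTop 1] with n h1 hn
    have hn' : (0:ℝ) < n := by exact_mod_cast hn
    rw [Real.dist_eq] at h1
    have : |Lsum I k n / n - c| * n ≤ ε' * n :=
      mul_le_mul_of_nonneg_right h1.le hn'.le
    calc |Lsum I k n - c * n| = |Lsum I k n / n - c| * n := by
          rw [← abs_of_pos hn', ← abs_mul]
          congr 1
          field_simp
          rw [abs_of_pos hn']; ring
      _ ≤ ε' * n := this
  obtain ⟨N₀, hN₀⟩ := ((hWev.and hIev).and (eventually_ge_atTop 1)).exists_forall_of_atTop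
  set r : ℝ := Real.exp (-(δ / 2)) with hrdef
  have hr0 : 0 < r := Real.exp_pos _
  have hr1 : r < 1 := by
    rw [hrdef, Real.exp_lt_one_iff]; linarith
  set A : ℝ := κ + ε' + Real.log (1 - r)⁻¹ with hAdef
  -- main upper bound for m ≥ N₀
  have hupper : ∀ m : ℕ, N₀ ≤ m → Real.log (Smap W I (k - (m : ℤ))) ≤ 4 * ε' * m + A := by
    intro m hm
    have hterm : ∀ l : ℕ, Jterm W I (k - (m : ℤ)) l ≤ Real.exp (κ + ε' + 4 * ε' * m) * r ^ l := by
      intro l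
      have hlog : Real.log (Jterm W I (k - (m : ℤ)) l)
          = (Lsum W k (m + (l + 1)) - Lsum W k m) - (Lsum I k (m + l) - Lsum I k m) := by
        rw [log_Jterm hW hI]
        rw [Lsum_add W k m (l + 1), Lsum_add I k m l]
        ring
      have b1 := (hN₀ (m + (l + 1)) (by omega)).1.1
      have b2 := (hN₀ m hm).1.1
      have b3 := (hN₀ (m + l) (by omega)).1.2
      have b4 := (hN₀ m hm).1.2
      rw [abs_le] at b1 b2 b3 b4
      have hl0 : (0:ℝ) ≤ (l : ℝ) := Nat.cast_nonneg l
      have hprod : 0 ≤ (δ / 2 - 2 * ε') * l :=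
        mul_nonneg (by linarith) hl0
      have hkey : Real.log (Jterm W I (k - (m : ℤ)) l) ≤ (κ + ε' + 4 * ε' * m) - (δ / 2) * l := by
        rw [hlog]
        push_cast at b1 b2 b3 b4 ⊢
        have hδeq : c = κ + δ := by rw [hδdef]; ring
        rw [hδeq] at b3 b4
        nlinarith [b1.2, b2.1, b3.1, b4.2, hprod]
      have := Real.exp_le_exp.2 hkey
      rw [Real.exp_log (Jterm_pos hW hI _ l)] at this
      refine this.trans (le_of_eq ?_)
      rw [sub_eq_add_neg, Real.exp_add]
      congr 1
      rw [hrdef, ← Real.exp_nat_mul]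
      congr 1
      ring
    have hgeo : Summable (fun l : ℕ => Real.exp (κ + ε' + 4 * ε' * m) * r ^ l) :=
      (summable_geometric_of_lt_one hr0.le hr1).mul_left _
    have hSle : Smap W I (k - (m : ℤ)) ≤ Real.exp (κ + ε' + 4 * ε' * m) * (1 - r)⁻¹ := by
      have := Summable.tsum_le_tsum hterm (summable_Jterm hW hI hcW hcI hκc _) hgeo
      rwa [tsum_mul_left, tsum_geometric_of_lt_one hr0.le hr1] at this
    have hrpos : (0:ℝ) < (1 - r)⁻¹ := by
      rw [inv_pos]; linarith
    calc Real.log (Smap W I (k - (m : ℤ)))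
        ≤ Real.log (Real.exp (κ + ε' + 4 * ε' * m) * (1 - r)⁻¹) := by
          apply Real.log_le_log (Smap_pos hW hI hcW hcI hκc _) hSle
      _ = (κ + ε' + 4 * ε' * m) + Real.log (1 - r)⁻¹ := by
          rw [Real.log_mul (Real.exp_pos _).ne' hrpos.ne', Real.log_exp]
      _ = 4 * ε' * m + A := by rw [hAdef]; ring
  -- lower bound : Smap ≥ W
  have hlowerW : ∀ m : ℕ, Real.log (W (k - (m : ℤ))) ≤ Real.log (Smap W I (k - (m : ℤ))) := by
    intro m
    apply Real.log_le_log (hW _)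
    have h0 : Jterm W I (k - (m : ℤ)) 0 = W (k - (m : ℤ)) := by simp [Jterm]
    have := Summable.le_tsum (summable_Jterm hW hI hcW hcI hκc (k - (m : ℤ))) 0
      (fun l _ => (Jterm_pos hW hI _ l).le)
    rw [h0] at this
    exact this
  have hAev : ∀ᶠ m : ℕ in atTop, A / (m : ℝ) < ε' := by
    have : Tendsto (fun m : ℕ => A / (m : ℝ)) atTop (𝓝 0) := by
      simpa [div_eq_mul_inv] using (tendsto_const_nhds (x := A)).mul tendsto_inv_nat
    exact this.eventually_lt_const hε'
  have hWlogev : ∀ᶠ m : ℕ in atTop, -ε < Real.log (W (k - (m : ℤ))) / (m : ℝ) := by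
    have := tendsto_log_left hcW k
    exact this.eventually_const_lt (by linarith)
  rw [← eventually_atTop]
  filter_upwards [eventually_ge_atTop N₀, eventually_ge_atTop 1, hAev, hWlogev]
    with m hm hm1 hA hWl
  rw [Real.dist_eq, sub_zero, abs_lt]
  have hm' : (0:ℝ) < m := by exact_mod_cast hm1
  constructor
  · calc -ε < Real.log (W (k - (m : ℤ))) / (m : ℝ) := hWl
      _ ≤ Real.log (Smap W I (k - (m : ℤ))) / (m : ℝ) :=
        div_le_div_of_nonneg_right (hlowerW m) hm'.le
  · calc Real.log (Smap W I (k - (m : ℤ))) / (m : ℝ)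
        ≤ (4 * ε' * m + A) / (m : ℝ) := div_le_div_of_nonneg_right (hupper m hm) hm'.le
      _ = 4 * ε' + A / m := by field_simp
      _ < 4 * ε' + ε' := by linarith
      _ ≤ 5 * (ε / 8) := by linarith
      _ < ε := by linarith

end conv2

section conv3
variable {W I : ℤ → ℝ} {κ c : ℝ} (hW : ∀ k, 0 < W k) (hI : ∀ k, 0 < I k)
  (hcW : cesaroLim W κ) (hcI : cesaroLim I c) (hκc : κ < c)

include hW hI hcW hcI hκc in
lemma tendsto_log_Smap_neg :
    Tendsto (fun n : ℕ => Real.log (Smap W I (-(n : ℤ))) / (n : ℝ)) atTop (𝓝 0) := by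
  have := log_Smap_tendsto hW hI hcW hcI hκc 0
  simpa using this

include hW hI hcW hcI hκc in
lemma cesaro_Dmap : cesaroLim (Dmap W I) c := by
  have hpos : ∀ j, 0 < Smap W I j := Smap_pos hW hI hcW hcI hκc
  have hsum : ∀ n : ℕ, (∑ r ∈ Finset.range n, Real.log (Dmap W I (-(r : ℤ))))
      = Lsum I 0 n + (Real.log (Smap W I (-(0:ℕ) : ℤ)) - Real.log (Smap W I (-(n : ℤ)))) := by
    intro n
    have hterm : ∀ r : ℕ, Real.log (Dmap W I (-(r : ℤ)))
        = Real.log (I (0 - (r : ℤ)))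
          + (Real.log (Smap W I (-(r : ℤ))) - Real.log (Smap W I (-((r + 1 : ℕ) : ℤ)))) := by
      intro r
      rw [Dmap, Real.log_div (mul_pos (hI _) (hpos _)).ne' (hpos _).ne',
        Real.log_mul (hI _).ne' (hpos _).ne']
      have e1 : (0 : ℤ) - (r : ℕ) = -(r : ℤ) := by ring
      have e2 : -(r : ℤ) - 1 = -((r + 1 : ℕ) : ℤ) := by push_cast; ring
      rw [e1, e2]
      ring
    rw [Finset.sum_congr rfl (fun r _ => hterm r), Finset.sum_add_distrib,
      Finset.sum_range_sub' (fun r : ℕ => Real.log (Smap W I (-(r : ℤ)))) n]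
    rfl
  rw [cesaroLim]
  have h1 := tendsto_Lsum hcI 0
  have h2 : Tendsto (fun n : ℕ => Real.log (Smap W I (-(0:ℕ) : ℤ)) / (n : ℝ)) atTop (𝓝 0) := by
    simpa [div_eq_mul_inv] using (tendsto_const_nhds (x := Real.log (Smap W I (-(0:ℕ) : ℤ)))).mul tendsto_inv_nat
  have h3 := tendsto_log_Smap_neg hW hI hcW hcI hκc
  have h4 := (h1.add h2).sub h3
  rw [add_zero, sub_zero] at h4
  refine h4.congr ?_
  intro n
  rw [hsum n]
  ring

include hW hI hcW hcI hκc in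
lemma cesaro_Rmap : cesaroLim (Rmap W I) κ := by
  have hpos : ∀ j, 0 < Smap W I j := Smap_pos hW hI hcW hcI hκc
  have hsum : ∀ n : ℕ, (∑ r ∈ Finset.range n, Real.log (Rmap W I (-(r : ℤ))))
      = Lsum W 0 n - (Real.log (Smap W I (-(0:ℕ) : ℤ)) - Real.log (Smap W I (-(n : ℤ)))) := by
    intro n
    have hterm : ∀ r : ℕ, Real.log (Rmap W I (-(r : ℤ)))
        = Real.log (W (0 - (r : ℤ)))
          - (Real.log (Smap W I (-(r : ℤ))) - Real.log (Smap W I (-((r + 1 : ℕ) : ℤ)))) := by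
      intro r
      rw [Rmap_eq hW hI hcW hcI hκc, Real.log_div (mul_pos (hW _) (hpos _)).ne' (hpos _).ne',
        Real.log_mul (hW _).ne' (hpos _).ne']
      have e1 : (0 : ℤ) - (r : ℕ) = -(r : ℤ) := by ring
      have e2 : -(r : ℤ) - 1 = -((r + 1 : ℕ) : ℤ) := by push_cast; ring
      rw [e1, e2]
      ring
    rw [Finset.sum_congr rfl (fun r _ => hterm r), Finset.sum_sub_distrib,
      Finset.sum_range_sub' (fun r : ℕ => Real.log (Smap W I (-(r : ℤ)))) n]
    rfl
  rw [cesaroLim]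
  have h1 := tendsto_Lsum hcW 0
  have h2 : Tendsto (fun n : ℕ => Real.log (Smap W I (-(0:ℕ) : ℤ)) / (n : ℝ)) atTop (𝓝 0) := by
    simpa [div_eq_mul_inv] using (tendsto_const_nhds (x := Real.log (Smap W I (-(0:ℕ) : ℤ)))).mul tendsto_inv_nat
  have h3 := tendsto_log_Smap_neg hW hI hcW hcI hκc
  have h4 := (h1.sub h2).add h3
  rw [add_zero, sub_zero] at h4
  refine h4.congr ?_
  intro n
  rw [hsum n]
  ring

end conv3

lemma log_prod_ratio {I1 I2 : ℤ → ℝ} (hI1 : ∀ k, 0 < I1 k) (hI2 : ∀ k, 0 < I2 k) (j : ℤ) (m : ℕ) :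
    Real.log (∏ r ∈ Finset.range m, (I1 (j - (r:ℤ)) / I2 (j - (r:ℤ))))
      = Lsum I1 j m - Lsum I2 j m := by
  rw [Real.log_prod (fun r _ => (div_pos (hI1 _) (hI2 _)).ne')]
  rw [Lsum, Lsum, ← Finset.sum_sub_distrib]
  exact Finset.sum_congr rfl fun r _ => Real.log_div (hI1 _).ne' (hI2 _).ne'

lemma prod_decay {I1 I2 Y : ℤ → ℝ} {c1 c2 : ℝ} (hI1 : ∀ k, 0 < I1 k) (hI2 : ∀ k, 0 < I2 k)
    (hc1 : cesaroLim I1 c1) (hc2 : cesaroLim I2 c2) (h12 : c1 < c2)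
    (hY : ∀ k, 0 < Y k) (j : ℤ)
    (hlog : Tendsto (fun m : ℕ => Real.log (Y (j - (m:ℤ))) / (m:ℝ)) atTop (𝓝 0)) :
    Tendsto (fun m : ℕ => (∏ r ∈ Finset.range m, (I1 (j - (r:ℤ)) / I2 (j - (r:ℤ)))) * Y (j - (m:ℤ)))
      atTop (𝓝 0) := by
  have hlim : c1 - c2 + 0 < 0 := by linarith
  apply tendsto_zero_of_log
    (fun m => mul_pos (Finset.prod_pos fun r _ => div_pos (hI1 _) (hI2 _)) (hY _)) hlim
  have h := ((tendsto_Lsum hc1 j).sub (tendsto_Lsum hc2 j)).add hlog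
  refine h.congr ?_
  intro m
  rw [Real.log_mul (Finset.prod_pos fun r _ => div_pos (hI1 _) (hI2 _)).ne' (hY _).ne',
    log_prod_ratio hI1 hI2]
  ring


set_option maxHeartbeats 1600000 in
lemma onestep {W I1 I2 : ℤ → ℝ} {κ c1 c2 : ℝ}
    (hW : ∀ k, 0 < W k) (hI1 : ∀ k, 0 < I1 k) (hI2 : ∀ k, 0 < I2 k)
    (hcW : cesaroLim W κ) (hc1 : cesaroLim I1 c1) (hc2 : cesaroLim I2 c2)
    (h01 : κ < c1) (h12 : c1 < c2) (k : ℤ) :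
    Dmap W (Dmap I1 I2) k = Dmap (Dmap W I1) (Dmap (Rmap W I1) I2) k := by
  have h02 : κ < c2 := lt_trans h01 h12
  obtain ⟨A, hAdef⟩ : ∃ f, f = Smap I1 I2 := ⟨_, rfl⟩
  obtain ⟨B, hBdef⟩ : ∃ f, f = Smap W I1 := ⟨_, rfl⟩
  have hApos : ∀ j, 0 < A j := by rw [hAdef]; exact Smap_pos hI1 hI2 hc1 hc2 h12
  have hBpos : ∀ j, 0 < B j := by rw [hBdef]; exact Smap_pos hW hI1 hcW hc1 h01
  -- X = D(I1,I2), W2 = R(W,I1), U = D(W,I1)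
  have hXpos : ∀ j, 0 < Dmap I1 I2 j := Dmap_pos hI1 hI2 hc1 hc2 h12
  have hcX : cesaroLim (Dmap I1 I2) c2 := cesaro_Dmap hI1 hI2 hc1 hc2 h12
  have hW2pos : ∀ j, 0 < Rmap W I1 j := Rmap_pos hW hI1 hcW hc1 h01
  have hcW2 : cesaroLim (Rmap W I1) κ := cesaro_Rmap hW hI1 hcW hc1 h01
  have hUpos : ∀ j, 0 < Dmap W I1 j := Dmap_pos hW hI1 hcW hc1 h01
  have hcU : cesaroLim (Dmap W I1) c1 := cesaro_Dmap hW hI1 hcW hc1 h01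
  have hVpos : ∀ j, 0 < Dmap (Rmap W I1) I2 j := Dmap_pos hW2pos hI2 hcW2 hc2 h02
  have hcV : cesaroLim (Dmap (Rmap W I1) I2) c2 := cesaro_Dmap hW2pos hI2 hcW2 hc2 h02
  obtain ⟨P, hPdef⟩ : ∃ f, f = Smap W (Dmap I1 I2) := ⟨_, rfl⟩
  obtain ⟨Q, hQdef⟩ : ∃ f, f = Smap (Rmap W I1) I2 := ⟨_, rfl⟩
  obtain ⟨SUV, hSUVdef⟩ : ∃ f, f = Smap (Dmap W I1) (Dmap (Rmap W I1) I2) := ⟨_, rfl⟩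
  have hPpos : ∀ j, 0 < P j := by rw [hPdef]; exact Smap_pos hW hXpos hcW hcX h02
  have hQpos : ∀ j, 0 < Q j := by rw [hQdef]; exact Smap_pos hW2pos hI2 hcW2 hc2 h02
  have hSUVpos : ∀ j, 0 < SUV j := by
    rw [hSUVdef]; exact Smap_pos hUpos hVpos hcU hcV h12
  -- formulas for the one-site maps
  have hXeq : ∀ j, Dmap I1 I2 j = I2 j * A j / A (j - 1) := by
    intro j; rw [hAdef]; rfl
  have hUeq : ∀ j, Dmap W I1 j = I1 j * B j / B (j - 1) := by
    intro j; rw [hBdef]; rfl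
  have hVeq : ∀ j, Dmap (Rmap W I1) I2 j = I2 j * Q j / Q (j - 1) := by
    intro j; rw [hQdef]; rfl
  have hW2eq : ∀ j, Rmap W I1 j = W j * B (j - 1) / B j := by
    rw [hBdef]; exact Rmap_eq hW hI1 hcW hc1 h01
  -- recursions
  have hArec : ∀ j, A j = I1 j + (I1 j / I2 j) * A (j - 1) := by
    rw [hAdef]; exact Smap_rec hI1 hI2 hc1 hc2 h12
  have hBrec : ∀ j, B j = W j + (W j / I1 j) * B (j - 1) := by
    rw [hBdef]; exact Smap_rec hW hI1 hcW hc1 h01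
  have hW2eq2 : ∀ j, Rmap W I1 j = I1 j * B (j - 1) / (B (j - 1) + I1 j) := by
    intro j
    have hr2 : I1 j * B j = I1 j * W j + W j * B (j - 1) := by
      rw [hBrec j]
      have := (hI1 j).ne'
      field_simp
    have hr3 : Rmap W I1 j * B j = W j * B (j - 1) := by
      rw [hW2eq j]
      have := (hBpos j).ne'
      field_simp
    have hsum : (0:ℝ) < B (j - 1) + I1 j := by
      have := hBpos (j - 1); have := hI1 j; positivity
    rw [eq_div_iff hsum.ne']
    apply mul_right_cancel₀ (hBpos j).ne'
    linear_combination (B (j - 1) + I1 j) * hr3 - B (j - 1) * hr2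
  have hPrec : ∀ j, P j = W j + (W j * A (j - 1) / (I2 j * A j)) * P (j - 1) := by
    intro j
    have h := Smap_rec hW hXpos hcW hcX h02 j
    rw [← hPdef] at h
    rw [h, hXeq j]
    have := (hApos j).ne'
    have := (hApos (j - 1)).ne'
    have := (hI2 j).ne'
    field_simp
  have hQrec : ∀ j, Q j = Rmap W I1 j + (Rmap W I1 j / I2 j) * Q (j - 1) := by
    intro j
    have h := Smap_rec hW2pos hI2 hcW2 hc2 h02 j
    rw [← hQdef] at h
    exact h
  have hSUVrec : ∀ j, SUV j
      = Dmap W I1 j + (Dmap W I1 j / Dmap (Rmap W I1) I2 j) * SUV (j - 1) := by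
    intro j
    have h := Smap_rec hUpos hVpos hcU hcV h12 j
    rw [← hSUVdef] at h
    exact h
  -- derived quantities
  obtain ⟨E, hE⟩ : ∃ f : ℤ → ℝ, ∀ j, f j = SUV j * Q j / B j := ⟨_, fun j => rfl⟩
  obtain ⟨C, hC⟩ : ∃ f : ℤ → ℝ, ∀ j, f j = A j * P j := ⟨_, fun j => rfl⟩
  have hEpos : ∀ j, 0 < E j := fun j => by
    rw [hE j]
    have := hSUVpos j; have := hQpos j; have := hBpos j
    positivity
  have hCpos : ∀ j, 0 < C j := fun j => by
    rw [hC j]; exact mul_pos (hApos j) (hPpos j)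
  have hErec : ∀ j, E j = I1 j * Q j / B (j - 1) + (I1 j / I2 j) * E (j - 1) := by
    intro j
    have h1 := (hBpos j).ne'
    have h2 := (hBpos (j - 1)).ne'
    have h3 := (hQpos j).ne'
    have h4 := (hQpos (j - 1)).ne'
    have h5 := (hI1 j).ne'
    have h6 := (hI2 j).ne'
    rw [hE j, hE (j - 1), hSUVrec j, hUeq j, hVeq j]
    field_simp
  have hCrec : ∀ j, C j = W j * A j + (W j / I2 j) * C (j - 1) := by
    intro j
    have h1 := (hApos j).ne'
    have h2 := (hApos (j - 1)).ne'
    have h6 := (hI2 j).ne'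
    rw [hC j, hC (j - 1), hPrec j]
    field_simp
  -- log control
  have hlogA : ∀ j, Tendsto (fun m : ℕ => Real.log (A (j - (m:ℤ))) / (m:ℝ)) atTop (𝓝 0) := by
    rw [hAdef]; exact log_Smap_tendsto hI1 hI2 hc1 hc2 h12
  have hlogB : ∀ j, Tendsto (fun m : ℕ => Real.log (B (j - (m:ℤ))) / (m:ℝ)) atTop (𝓝 0) := by
    rw [hBdef]; exact log_Smap_tendsto hW hI1 hcW hc1 h01
  have hlogP : ∀ j, Tendsto (fun m : ℕ => Real.log (P (j - (m:ℤ))) / (m:ℝ)) atTop (𝓝 0) := by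
    rw [hPdef]; exact log_Smap_tendsto hW hXpos hcW hcX h02
  have hlogQ : ∀ j, Tendsto (fun m : ℕ => Real.log (Q (j - (m:ℤ))) / (m:ℝ)) atTop (𝓝 0) := by
    rw [hQdef]; exact log_Smap_tendsto hW2pos hI2 hcW2 hc2 h02
  have hlogSUV : ∀ j, Tendsto (fun m : ℕ => Real.log (SUV (j - (m:ℤ))) / (m:ℝ)) atTop (𝓝 0) := by
    rw [hSUVdef]; exact log_Smap_tendsto hUpos hVpos hcU hcV h12
  have hlogE : ∀ j, Tendsto (fun m : ℕ => Real.log (E (j - (m:ℤ))) / (m:ℝ)) atTop (𝓝 0) := by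
    intro j
    have h := ((hlogSUV j).add (hlogQ j)).sub (hlogB j)
    rw [add_zero, sub_zero] at h
    refine h.congr ?_
    intro m
    rw [hE]
    rw [Real.log_div (mul_pos (hSUVpos _) (hQpos _)).ne' (hBpos _).ne',
      Real.log_mul (hSUVpos _).ne' (hQpos _).ne']
    ring
  -- Step 1 : A = Q + E
  have key2 : ∀ j, A j = Q j + E j := by
    intro j
    have key1 : ∀ j', A j' - Q j' - E j'
        = (I1 j' / I2 j') * (A (j' - 1) - Q (j' - 1) - E (j' - 1)) := by
      intro j'
      have h1 := (hBpos j').ne'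
      have h2 := (hBpos (j' - 1)).ne'
      have h5 := (hI1 j').ne'
      have h6 := (hI2 j').ne'
      have hWj := (hW j').ne'
      have hzero : (0:ℝ) < B (j' - 1) + I1 j' := by
        have := hBpos (j' - 1); have := hI1 j'
        positivity
      have hzero' := hzero.ne'
      rw [hArec j', hErec j', hQrec j', hW2eq2 j']
      field_simp
      ring
    have hiter : ∀ m : ℕ, A j - Q j - E j
        = (∏ r ∈ Finset.range m, (I1 (j - (r:ℤ)) / I2 (j - (r:ℤ))))
          * (A (j - (m:ℤ)) - Q (j - (m:ℤ)) - E (j - (m:ℤ))) := by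
      intro m
      induction m with
      | zero => simp
      | succ m ih =>
          rw [ih, Finset.prod_range_succ, key1 (j - (m:ℤ))]
          have e : j - (m:ℤ) - 1 = j - ((m + 1 : ℕ) : ℤ) := by push_cast; ring
          rw [e]
          ring
    have habs : ∀ m : ℕ, |A j - Q j - E j|
        ≤ (∏ r ∈ Finset.range m, (I1 (j - (r:ℤ)) / I2 (j - (r:ℤ)))) * A (j - (m:ℤ))
          + ((∏ r ∈ Finset.range m, (I1 (j - (r:ℤ)) / I2 (j - (r:ℤ)))) * Q (j - (m:ℤ))
          + (∏ r ∈ Finset.range m, (I1 (j - (r:ℤ)) / I2 (j - (r:ℤ)))) * E (j - (m:ℤ))) := by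
      intro m
      rw [hiter m, abs_mul]
      have hprodpos : 0 < ∏ r ∈ Finset.range m, (I1 (j - (r:ℤ)) / I2 (j - (r:ℤ))) :=
        Finset.prod_pos fun r _ => div_pos (hI1 _) (hI2 _)
      rw [abs_of_pos hprodpos]
      have h1 := hApos (j - (m:ℤ)); have h2 := hQpos (j - (m:ℤ)); have h3 := hEpos (j - (m:ℤ))
      have habs3 : |A (j - (m:ℤ)) - Q (j - (m:ℤ)) - E (j - (m:ℤ))|
          ≤ A (j - (m:ℤ)) + Q (j - (m:ℤ)) + E (j - (m:ℤ)) := by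
        rw [abs_le]; constructor <;> linarith
      nlinarith [hprodpos.le, habs3]
    have htend : Tendsto (fun m : ℕ =>
        (∏ r ∈ Finset.range m, (I1 (j - (r:ℤ)) / I2 (j - (r:ℤ)))) * A (j - (m:ℤ))
          + ((∏ r ∈ Finset.range m, (I1 (j - (r:ℤ)) / I2 (j - (r:ℤ)))) * Q (j - (m:ℤ))
          + (∏ r ∈ Finset.range m, (I1 (j - (r:ℤ)) / I2 (j - (r:ℤ)))) * E (j - (m:ℤ))))
        atTop (𝓝 0) := by
      have t1 := prod_decay hI1 hI2 hc1 hc2 h12 hApos j (hlogA j)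
      have t2 := prod_decay hI1 hI2 hc1 hc2 h12 hQpos j (hlogQ j)
      have t3 := prod_decay hI1 hI2 hc1 hc2 h12 hEpos j (hlogE j)
      have := t1.add (t2.add t3)
      simpa using this
    have hle : |A j - Q j - E j| ≤ 0 := ge_of_tendsto' htend habs
    have := abs_nonpos_iff.1 hle
    linarith [this]
  -- Step 2 : C = B * E
  have key3 : ∀ j, C j = B j * E j := by
    intro j
    have key1 : ∀ j', C j' - B j' * E j'
        = (W j' / I2 j') * (C (j' - 1) - B (j' - 1) * E (j' - 1)) := by
      intro j'
      have h1 := (hBpos j').ne'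
      have h2 := (hBpos (j' - 1)).ne'
      have h3 := (hQpos j').ne'
      have h5 := (hI1 j').ne'
      have h6 := (hI2 j').ne'
      have hWj := (hW j').ne'
      have hzero : (0:ℝ) < B (j' - 1) + I1 j' := by
        have := hBpos (j' - 1); have := hI1 j'
        positivity
      have hzero' := hzero.ne'
      have hAeq : A (j' - 1) = Q (j' - 1) + E (j' - 1) := key2 (j' - 1)
      rw [hCrec j', hErec j', hQrec j', hW2eq2 j', hArec j', hAeq, hBrec j']
      field_simp
      ring
    have hiter : ∀ m : ℕ, C j - B j * E j
        = (∏ r ∈ Finset.range m, (W (j - (r:ℤ)) / I2 (j - (r:ℤ))))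
          * (C (j - (m:ℤ)) - B (j - (m:ℤ)) * E (j - (m:ℤ))) := by
      intro m
      induction m with
      | zero => simp
      | succ m ih =>
          rw [ih, Finset.prod_range_succ, key1 (j - (m:ℤ))]
          have e : j - (m:ℤ) - 1 = j - ((m + 1 : ℕ) : ℤ) := by push_cast; ring
          rw [e]
          ring
    have hBEpos : ∀ j', 0 < B j' * E j' := fun j' => mul_pos (hBpos j') (hEpos j')
    have hlogBE : Tendsto (fun m : ℕ => Real.log (B (j - (m:ℤ)) * E (j - (m:ℤ))) / (m:ℝ))
        atTop (𝓝 0) := by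
      have h := (hlogB j).add (hlogE j)
      rw [add_zero] at h
      refine h.congr ?_
      intro m
      rw [Real.log_mul (hBpos _).ne' (hEpos _).ne']
      ring
    have hlogC : Tendsto (fun m : ℕ => Real.log (C (j - (m:ℤ))) / (m:ℝ)) atTop (𝓝 0) := by
      have h := (hlogA j).add (hlogP j)
      rw [add_zero] at h
      refine h.congr ?_
      intro m
      rw [hC]
      rw [Real.log_mul (hApos _).ne' (hPpos _).ne']
      ring
    have habs : ∀ m : ℕ, |C j - B j * E j|
        ≤ (∏ r ∈ Finset.range m, (W (j - (r:ℤ)) / I2 (j - (r:ℤ)))) * C (j - (m:ℤ))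
          + (∏ r ∈ Finset.range m, (W (j - (r:ℤ)) / I2 (j - (r:ℤ))))
            * (B (j - (m:ℤ)) * E (j - (m:ℤ))) := by
      intro m
      rw [hiter m, abs_mul]
      have hprodpos : 0 < ∏ r ∈ Finset.range m, (W (j - (r:ℤ)) / I2 (j - (r:ℤ))) :=
        Finset.prod_pos fun r _ => div_pos (hW _) (hI2 _)
      rw [abs_of_pos hprodpos]
      have h1 := hCpos (j - (m:ℤ)); have h2 := hBEpos (j - (m:ℤ))
      have habs3 : |C (j - (m:ℤ)) - B (j - (m:ℤ)) * E (j - (m:ℤ))|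
          ≤ C (j - (m:ℤ)) + B (j - (m:ℤ)) * E (j - (m:ℤ)) := by
        rw [abs_le]; constructor <;> linarith
      nlinarith [hprodpos.le, habs3]
    have htend : Tendsto (fun m : ℕ =>
        (∏ r ∈ Finset.range m, (W (j - (r:ℤ)) / I2 (j - (r:ℤ)))) * C (j - (m:ℤ))
          + (∏ r ∈ Finset.range m, (W (j - (r:ℤ)) / I2 (j - (r:ℤ))))
            * (B (j - (m:ℤ)) * E (j - (m:ℤ)))) atTop (𝓝 0) := by
      have t1 := prod_decay hW hI2 hcW hc2 h02 hCpos j hlogC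
      have t2 := prod_decay hW hI2 hcW hc2 h02 hBEpos j hlogBE
      have := t1.add t2
      simpa using this
    have hle : |C j - B j * E j| ≤ 0 := ge_of_tendsto' htend habs
    have := abs_nonpos_iff.1 hle
    linarith [this]
  -- final computation
  have n1 := (hApos k).ne'
  have n2 := (hApos (k - 1)).ne'
  have n3 := (hBpos k).ne'
  have n4 := (hBpos (k - 1)).ne'
  have n5 := (hQpos k).ne'
  have n6 := (hQpos (k - 1)).ne'
  have n7 := (hEpos k).ne'
  have n8 := (hEpos (k - 1)).ne'
  have n9 := (hI2 k).ne'
  have hgoalL : Dmap W (Dmap I1 I2) k = Dmap I1 I2 k * P k / P (k - 1) := by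
    rw [Dmap, ← hPdef]
  have hgoalR : Dmap (Dmap W I1) (Dmap (Rmap W I1) I2) k
      = Dmap (Rmap W I1) I2 k * SUV k / SUV (k - 1) := by
    rw [Dmap, ← hSUVdef]
  rw [hgoalL, hgoalR, hXeq k, hVeq k]
  have hPk : P k = C k / A k := by
    rw [hC k, mul_div_cancel_left₀ _ n1]
  have hPk1 : P (k - 1) = C (k - 1) / A (k - 1) := by
    rw [hC (k - 1), mul_div_cancel_left₀ _ n2]
  have hSk : SUV k = E k * B k / Q k := by
    rw [hE k]
    field_simp
  have hSk1 : SUV (k - 1) = E (k - 1) * B (k - 1) / Q (k - 1) := by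
    rw [hE (k - 1)]
    field_simp
  rw [hPk, hPk1, hSk, hSk1, key3 k, key3 (k - 1)]
  field_simp
/-- The iterated update map `D^{(n+1)}(I⁰,…,Iⁿ)`. -/
def Diter : (n : ℕ) → (Fin (n + 1) → ℤ → ℝ) → ℤ → ℝ
  | 0, I => I 0
  | n + 1, I => Dmap (I 0) (Diter n (fun i => I i.succ))

/-- The sequentially updated driving weights: `W⁰ = W`, `Wⁿ⁺¹ = R(Wⁿ, Iⁿ)`. -/
def Witer (W : ℤ → ℝ) (I : ℕ → ℤ → ℝ) : ℕ → ℤ → ℝ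
  | 0 => W
  | n + 1 => Rmap (Witer W I n) (I n)


lemma Witer_shift (W : ℤ → ℝ) (I : ℕ → ℤ → ℝ) :
    ∀ n, Witer W I (n + 1) = Witer (Rmap W (I 0)) (fun j => I (j + 1)) n := by
  intro n
  induction n with
  | zero => rfl
  | succ n ih =>
      show Rmap (Witer W I (n + 1)) (I (n + 1)) = _
      rw [ih]
      rfl

lemma Diter_good : ∀ (n : ℕ) (I : Fin (n + 1) → ℤ → ℝ) (γ : Fin (n + 1) → ℝ),
    (∀ j k, 0 < I j k) → (∀ j, cesaroLim (I j) (γ j)) →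
    (∀ i j : Fin (n + 1), i < j → γ i < γ j) →
    (∀ k, 0 < Diter n I k) ∧ cesaroLim (Diter n I) (γ (Fin.last n)) := by
  intro n
  induction n with
  | zero =>
      intro I γ hpos hces _
      exact ⟨hpos 0, hces 0⟩
  | succ n ih =>
      intro I γ hpos hces hmono
      obtain ⟨hin_pos, hin_ces⟩ := ih (fun i => I i.succ) (fun i => γ i.succ)
        (fun j k => hpos _ _) (fun j => hces _) (fun i j hij => hmono _ _ (by simpa using hij))
      rw [Fin.succ_last] at hin_ces
      have hgap : γ 0 < γ (Fin.last (n + 1)) := by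
        apply hmono
        rw [Fin.lt_def]
        simp [Fin.val_last]
      constructor
      · exact Dmap_pos (hpos 0) hin_pos (hces 0) hin_ces hgap
      · exact cesaro_Dmap (hpos 0) hin_pos (hces 0) hin_ces hgap

lemma main_induction : ∀ (i : ℕ) (W : ℤ → ℝ) (I : ℕ → ℤ → ℝ) (κ : ℝ) (c : ℕ → ℝ),
    (∀ k, 0 < W k) → (∀ n k, 0 < I n k) → cesaroLim W κ → (∀ n, cesaroLim (I n) (c n)) →
    (∀ n, κ < c n) → StrictMono c →
    ∀ k, Dmap W (Diter i (fun j : Fin (i + 1) => I (j : ℕ))) k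
      = Diter i (fun j : Fin (i + 1) => Dmap (Witer W I (j : ℕ)) (I (j : ℕ))) k := by
  intro i
  induction i with
  | zero =>
      intro W I κ c hW hI hcW hcI hκ hmono k
      show Dmap W (I 0) k = Dmap (Witer W I 0) (I 0) k
      rfl
  | succ i ih =>
      intro W I κ c hW hI hcW hcI hκ hmono k
      -- inner iterate
      have hZ := Diter_good i (fun j : Fin (i + 1) => I ((j : ℕ) + 1))
        (fun j : Fin (i + 1) => c ((j : ℕ) + 1)) (fun j k' => hI _ k') (fun j => hcI _)
        (fun a b hab => hmono (by omega : (a : ℕ) + 1 < (b : ℕ) + 1))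
      obtain ⟨hZpos, hZces⟩ := hZ
      set Z : ℤ → ℝ := Diter i (fun j : Fin (i + 1) => I ((j : ℕ) + 1)) with hZdef
      have hLHS : Diter (i + 1) (fun j : Fin (i + 2) => I (j : ℕ)) = Dmap (I 0) Z := by
        show Dmap (I 0) _ = Dmap (I 0) Z
        congr 1
      have hcZ : cesaroLim Z (c ((Fin.last i : ℕ) + 1)) := hZces
      have hlasti : ((Fin.last i : ℕ) + 1) = i + 1 := by simp [Fin.val_last]
      rw [hlasti] at hcZ
      have h1 : κ < c 0 := hκ 0
      have h2 : c 0 < c (i + 1) := hmono (by omega)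
      have hone := onestep hW (hI 0) hZpos hcW (hcI 0) hcZ h1 h2 k
      rw [hLHS, hone]
      -- apply the induction hypothesis with shifted data
      have hW' : ∀ k', 0 < Rmap W (I 0) k' := Rmap_pos hW (hI 0) hcW (hcI 0) h1
      have hcW' : cesaroLim (Rmap W (I 0)) κ := cesaro_Rmap hW (hI 0) hcW (hcI 0) h1
      have hih := ih (Rmap W (I 0)) (fun n => I (n + 1)) κ (fun n => c (n + 1))
        hW' (fun n k' => hI _ k') hcW' (fun n => hcI _) (fun n => hκ _)
        (fun a b hab => hmono (by omega))
      have hinner : Dmap (Rmap W (I 0)) Z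
          = Diter i (fun j : Fin (i + 1) =>
              Dmap (Witer (Rmap W (I 0)) (fun n => I (n + 1)) (j : ℕ)) (I ((j : ℕ) + 1))) := by
        funext k'
        exact hih k'
      rw [hinner]
      have hfun : (fun j : Fin (i + 1) =>
            Dmap (Witer (Rmap W (I 0)) (fun n => I (n + 1)) (j : ℕ)) (I ((j : ℕ) + 1)))
          = (fun j : Fin (i + 1) => Dmap (Witer W I ((j : ℕ) + 1)) (I ((j : ℕ) + 1))) := by
        funext j
        rw [← Witer_shift W I (j : ℕ)]
      show Dmap (Dmap W (I 0))
          (Diter i (fun j : Fin (i + 1) =>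
            Dmap (Witer (Rmap W (I 0)) (fun n => I (n + 1)) (j : ℕ)) (I ((j : ℕ) + 1)))) k
        = Dmap (Dmap (Witer W I 0) (I 0))
          (Diter i (fun j : Fin (i + 1) =>
            Dmap (Witer W I ((j : ℕ) + 1)) (I ((j : ℕ) + 1)))) k
      rw [hfun]
      rfl
theorem stmt9 (W : ℤ → ℝ) (I : ℕ → ℤ → ℝ) (κ : ℝ) (c : ℕ → ℝ)
    (hW : ∀ k, 0 < W k) (hI : ∀ i k, 0 < I i k)
    (hcW : cesaroLim W κ) (hcI : ∀ i, cesaroLim (I i) (c i))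
    (hκ : κ < c 0) (hmono : StrictMono c) :
    ∀ (i : ℕ) (k : ℤ),
      Dmap W (Diter i (fun j : Fin (i + 1) => I (j : ℕ))) k
        = Diter i (fun j : Fin (i + 1) => Dmap (Witer W I (j : ℕ)) (I (j : ℕ))) k := by
  intro i k
  have hκ' : ∀ n, κ < c n := by
    intro n
    rcases Nat.eq_zero_or_pos n with h | h
    · rw [h]; exact hκ
    · exact lt_trans hκ (hmono h)
  exact main_induction i W I κ c hW hI hcW hcI hκ' hmono k
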